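/- arXiv:2108.03610 — 4 statements merged into one kernel-verified Lean document; each statement's English description precedes it below -/
import Mathlib

section
/- For a topological space X and any x ∈ X, the small generated subgroup is contained in the quasi-small loop group, which is contained in the Spanier group: π₁^sg(X, x) ≤ π₁^qs(X, x) ≤ π₁^sp(X, x). -/
open unitInterval

noncomputable section

attribute [local instance] Path.Homotopic.setoid

variable {X Y : Type*} [TopologicalSpace X] [TopologicalSpace Y]

/-- `HClose f g` : the path `f` is homotopically close to the path `g` rel `∂I`:
for every partition `0 = t₀ < t₁ < ⋯ < tₙ = 1` and every sequence of open sets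
`U₁, …, Uₙ` with `g [tᵢ₋₁, tᵢ] ⊆ Uᵢ`, there is a path `γ`, homotopic to `f` rel `∂I`,
with `γ [tᵢ₋₁, tᵢ] ⊆ Uᵢ` and `γ tᵢ = g tᵢ` for all `i`. -/
def HClose {a b : X} (f g : Path a b) : Prop :=
  ∀ (n : ℕ) (t : Fin (n + 1) → I), t 0 = 0 → t (Fin.last n) = 1 → StrictMono t →
    ∀ U : Fin n → Set X, (∀ i, IsOpen (U i)) →
      (∀ i : Fin n, g '' Set.Icc (t i.castSucc) (t i.succ) ⊆ U i) →
      ∃ γ : Path a b,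
        (∀ i : Fin n, γ '' Set.Icc (t i.castSucc) (t i.succ) ⊆ U i) ∧
        (∀ i : Fin (n + 1), γ (t i) = g (t i)) ∧ γ.Homotopic f

/-- The class of a loop at `x` as an element of the fundamental group. -/
def pathClass {x : X} (f : Path x x) : FundamentalGroup X x :=
  FundamentalGroup.fromPath ⟦f⟧

/-- The `H`-quasi-small loop set `π_H^qs(X, x)`. -/
def qsSet (x : X) (H : Set (FundamentalGroup X x)) : Set (FundamentalGroup X x) :=
  { p | ∃ f h : Path x x, pathClass f = p ∧ pathClass h ∈ H ∧ HClose f h }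

/-- The quasi-small loop group `π₁^qs(X, x)`. -/
def qs (x : X) : Set (FundamentalGroup X x) :=
  qsSet x (⊥ : Subgroup (FundamentalGroup X x))

/-- The Spanier group of `(X, x)` with respect to the cover `𝒰`. -/
def spanierCover (x : X) (𝒰 : Set (Set X)) : Subgroup (FundamentalGroup X x) :=
  Subgroup.closure { p | ∃ (y : X) (u : Path x y) (v : Path y y) (U : Set X),
    U ∈ 𝒰 ∧ Set.range v ⊆ U ∧ p = pathClass ((u.trans v).trans u.symm) }

/-- The (unbased) Spanier group `π₁^sp(X, x)`. -/
def spanierGroup (x : X) : Subgroup (FundamentalGroup X x) :=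
  ⨅ (𝒰 : Set (Set X)) (_ : ∀ U ∈ 𝒰, IsOpen U) (_ : ⋃₀ 𝒰 = Set.univ), spanierCover x 𝒰

/-- The small generated subgroup `π₁^sg(X, x)`. -/
def smallGenerated (x : X) : Subgroup (FundamentalGroup X x) :=
  Subgroup.closure { p | ∃ (y : X) (β : Path x y) (α : Path y y),
    HClose α (Path.refl y) ∧ p = pathClass ((β.trans α).trans β.symm) }

/-- `X` is homotopically path Hausdorff relative to `H ⊆ π₁(X, x)`. -/
def HPHausdorffRel (x : X) (H : Set (FundamentalGroup X x)) : Prop :=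
  ∀ (y : X) (α β : Path x y), pathClass (α.trans β.symm) ∉ H →
    ∃ (n : ℕ) (t : Fin (n + 1) → I), t 0 = 0 ∧ t (Fin.last n) = 1 ∧ StrictMono t ∧
      ∃ U : Fin n → Set X, (∀ i, IsOpen (U i)) ∧
        (∀ i : Fin n, α '' Set.Icc (t i.castSucc) (t i.succ) ⊆ U i) ∧
        ∀ γ : Path x y, (∀ i : Fin n, γ '' Set.Icc (t i.castSucc) (t i.succ) ⊆ U i) →
          (∀ i : Fin (n + 1), γ (t i) = α (t i)) → pathClass (γ.trans β.symm) ∉ H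


namespace StmtAux

open CategoryTheory

lemma pathClass_hom {x : X} (f : Path x x) :
    FundamentalGroup.toPath (pathClass f) = (⟦f⟧ : Path.Homotopic.Quotient x x) := rfl

/-- paths as morphisms in the fundamental groupoid -/
abbrev hq {a b : X} (p : Path a b) :
    FundamentalGroupoid.mk a ⟶ FundamentalGroupoid.mk b := ⟦p⟧

lemma pathClass_eq {x : X} {f g : Path x x} (h : hq f = hq g) :
    pathClass f = pathClass g := by
  unfold pathClass
  exact congrArg _ h

lemma hq_eq_of_homotopic {a b : X} {p q : Path a b} (h : p.Homotopic q) : hq p = hq q :=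
  Quotient.sound h

lemma pathClass_eq_of_homotopic {x : X} {f g : Path x x} (h : f.Homotopic g) :
    pathClass f = pathClass g := pathClass_eq (hq_eq_of_homotopic h)

lemma pathClass_refl (x : X) : pathClass (Path.refl x) = 1 := rfl

lemma pathClass_mul {x : X} (f g : Path x x) :
    pathClass f * pathClass g = pathClass (g.trans f) := by
  rfl

lemma pathClass_symm {x : X} (f : Path x x) : pathClass f.symm = (pathClass f)⁻¹ := by
  rfl

lemma hq_trans {a b c : X} (p : Path a b) (q : Path b c) :
    hq (p.trans q) = hq p ≫ hq q := rfl

lemma hq_symm {a b : X} (p : Path a b) : hq p.symm = inv (hq p) := by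
  rw [← Groupoid.inv_eq_inv]; rfl

lemma path_cast_rfl {a b : X} (p : Path a b) : p.cast rfl rfl = p := by
  ext u; rfl

lemma hq_cast {a b a' b' : X} (p : Path a b) (hx : a' = a) (hy : b' = b) :
    hq (p.cast hx hy) = eqToHom (by rw [hx]) ≫ hq p ≫ eqToHom (by rw [hy]) := by
  subst hx; subst hy
  rw [path_cast_rfl]
  simp

/-- The subpath of `f` from `f s` to `f t`, linearly reparametrized. -/
def subp {a b : X} (f : Path a b) (s t : I) : Path (f s) (f t) where
  toFun u := f.extend ((1 - (u : ℝ)) * (s : ℝ) + (u : ℝ) * (t : ℝ))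
  continuous_toFun := f.continuous_extend.comp (by fun_prop)
  source' := by
    simp only [Set.Icc.coe_zero, sub_zero, one_mul, zero_mul, add_zero]
    exact f.extend_extends' s
  target' := by
    simp only [Set.Icc.coe_one, sub_self, zero_mul, one_mul, zero_add]
    exact f.extend_extends' t

lemma subp_apply {a b : X} (f : Path a b) (s t : I) (u : I) :
    subp f s t u = f.extend ((1 - (u : ℝ)) * (s : ℝ) + (u : ℝ) * (t : ℝ)) := rfl

lemma subp_mem_image {a b : X} (f : Path a b) {s t : I} (hst : s ≤ t) (u : I) :
    subp f s t u ∈ f '' Set.Icc s t := by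
  have hu0 : (0:ℝ) ≤ (u:ℝ) := u.2.1
  have hu1 : (u:ℝ) ≤ 1 := u.2.2
  have hst' : (s:ℝ) ≤ (t:ℝ) := hst
  set r : ℝ := (1 - (u : ℝ)) * (s : ℝ) + (u : ℝ) * (t : ℝ) with hr
  have h1 : (s:ℝ) ≤ r := by nlinarith
  have h2 : r ≤ (t:ℝ) := by nlinarith
  have hmem : r ∈ Set.Icc (0:ℝ) 1 := ⟨le_trans s.2.1 h1, le_trans h2 t.2.2⟩
  have : subp f s t u = f ⟨r, hmem⟩ := f.extend_apply hmem
  rw [this]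
  exact ⟨⟨r, hmem⟩, ⟨h1, h2⟩, rfl⟩

lemma range_subp_subset {a b : X} (f : Path a b) {s t : I} (hst : s ≤ t) :
    Set.range (subp f s t) ⊆ f '' Set.Icc s t :=
  Set.range_subset_iff.2 (subp_mem_image f hst)

/-- two reparametrizations of the same path with the same endpoints are homotopic rel ∂I. -/
lemma homotopic_of_extend {a b c d : X} (F : Path a b) {φ₀ φ₁ : I → ℝ}
    (hc₀ : Continuous φ₀) (hc₁ : Continuous φ₁)
    (h0 : φ₀ 0 = φ₁ 0) (h1 : φ₀ 1 = φ₁ 1)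
    (p q : Path c d) (hp : ∀ u, p u = F.extend (φ₀ u)) (hq : ∀ u, q u = F.extend (φ₁ u)) :
    p.Homotopic q := by
  refine ⟨{ toFun := fun z => F.extend ((1 - (z.1 : ℝ)) * φ₀ z.2 + (z.1 : ℝ) * φ₁ z.2)
            continuous_toFun := ?_
            map_zero_left := ?_
            map_one_left := ?_
            prop' := ?_ }⟩
  · exact F.continuous_extend.comp (by fun_prop)
  · intro u
    simp only [ContinuousMap.coe_mk, Set.Icc.coe_zero, sub_zero, one_mul, zero_mul, add_zero]
    exact (hp u).symm
  · intro u
    simp only [ContinuousMap.coe_mk, Set.Icc.coe_one, sub_self, zero_mul, one_mul, zero_add]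
    exact (hq u).symm
  · intro τ u hu
    have key : ∀ r : ℝ, ((1 : ℝ) - (τ:ℝ)) * r + (τ:ℝ) * r = r := fun r => by ring
    simp only [Set.mem_insert_iff, Set.mem_singleton_iff] at hu
    rcases hu with rfl | rfl
    · show F.extend ((1 - (τ:ℝ)) * φ₀ 0 + (τ:ℝ) * φ₁ 0) = _
      rw [← h0, key, ← hp]
      rfl
    · show F.extend ((1 - (τ:ℝ)) * φ₀ 1 + (τ:ℝ) * φ₁ 1) = _
      rw [← h1, key, ← hp]
      rfl

/-- splitting a linear subpath at an intermediate parameter, up to homotopy -/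
lemma split_homotopic {a b x₀ x₁ x₂ : X} (F : Path a b) (s₀ s u : ℝ)
    (p : Path x₀ x₂) (q : Path x₀ x₁) (r : Path x₁ x₂)
    (hp : ∀ w : I, p w = F.extend ((1 - (w:ℝ)) * s₀ + (w:ℝ) * u))
    (hq : ∀ w : I, q w = F.extend ((1 - (w:ℝ)) * s₀ + (w:ℝ) * s))
    (hr : ∀ w : I, r w = F.extend ((1 - (w:ℝ)) * s + (w:ℝ) * u)) :
    p.Homotopic (q.trans r) := by
  have hcont : ∀ c d : ℝ, Continuous fun w : I => (1 - (w:ℝ)) * c + (w:ℝ) * d := by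
    intro c d; fun_prop
  refine homotopic_of_extend F (φ₀ := fun w => (1 - (w:ℝ)) * s₀ + (w:ℝ) * u)
    (φ₁ := fun w : I => if (w:ℝ) ≤ 1/2 then (1 - 2*(w:ℝ)) * s₀ + (2*(w:ℝ)) * s
      else (1 - (2*(w:ℝ) - 1)) * s + (2*(w:ℝ) - 1) * u)
    (hcont s₀ u) ?_ (by norm_num) (by norm_num) p (q.trans r) hp ?_
  · apply Continuous.if_le (f := fun w : I => (w:ℝ)) (g := fun _ : I => (1:ℝ)/2)
    · fun_prop
    · fun_prop
    · fun_prop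
    · fun_prop
    · intro w hw; rw [hw]; ring
  · intro w
    rw [Path.trans_apply]
    split_ifs with h
    · rw [hq]
    · rw [hr]

lemma HClose.refl' {a b : X} (g : Path a b) : HClose g g :=
  fun _ _ _ _ _ _ _ him => ⟨g, him, fun _ => rfl, Path.Homotopic.refl g⟩

lemma HClose.congr {a b : X} {f f' g : Path a b} (hf : f.Homotopic f') (h : HClose f g) :
    HClose f' g := by
  intro n t h0 h1 hm U hop him
  obtain ⟨γ, h1', h2', h3'⟩ := h n t h0 h1 hm U hop him
  exact ⟨γ, h1', h2', h3'.trans hf⟩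

lemma symm_strictAnti : StrictAnti (unitInterval.symm) := by
  intro u v huv
  rw [← Subtype.coe_lt_coe] at huv ⊢
  rw [unitInterval.coe_symm_eq, unitInterval.coe_symm_eq]
  linarith

lemma symm_antitone : Antitone (unitInterval.symm) := symm_strictAnti.antitone

lemma symm_Icc_image (l r : I) :
    unitInterval.symm '' Set.Icc l r = Set.Icc (unitInterval.symm r) (unitInterval.symm l) := by
  ext u
  constructor
  · rintro ⟨v, ⟨h1, h2⟩, rfl⟩
    exact ⟨symm_antitone h2, symm_antitone h1⟩
  · rintro ⟨h1, h2⟩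
    refine ⟨unitInterval.symm u, ⟨?_, ?_⟩, unitInterval.symm_symm u⟩
    · have := symm_antitone h2
      rwa [unitInterval.symm_symm] at this
    · have := symm_antitone h1
      rwa [unitInterval.symm_symm] at this

lemma path_symm_image {a b : X} (γ : Path a b) (l r : I) :
    γ.symm '' Set.Icc l r = γ '' Set.Icc (unitInterval.symm r) (unitInterval.symm l) := by
  rw [← symm_Icc_image, ← Set.image_comp]
  rfl

lemma HClose.symm' {a b : X} {f g : Path a b} (H : HClose f g) : HClose f.symm g.symm := by
  intro n t ht0 ht1 htm U hUo hg
  have key : ∀ (i : Fin n), (fun j => unitInterval.symm (t j.rev)) i.castSucc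
      = unitInterval.symm (t i.rev.succ) := by
    intro i; simp only [Fin.rev_castSucc]
  have key2 : ∀ (i : Fin n), (fun j => unitInterval.symm (t j.rev)) i.succ
      = unitInterval.symm (t i.rev.castSucc) := by
    intro i; simp only [Fin.rev_succ]
  obtain ⟨γ, hγU, hγt, hγf⟩ := H n (fun j => unitInterval.symm (t j.rev))
    (by simp [Fin.rev_zero, ht1])
    (by simp [Fin.rev_last, ht0])
    (by
      intro i j hij
      exact symm_strictAnti (htm (Fin.rev_lt_rev.mpr hij)))
    (fun i => U i.rev) (fun i => hUo i.rev)
    (by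
      intro i
      rw [Fin.rev_castSucc, Fin.rev_succ, ← symm_Icc_image, ← Set.image_comp]
      have : (g ∘ unitInterval.symm) = g.symm := rfl
      rw [this]
      exact hg i.rev)
  refine ⟨γ.symm, ?_, ?_, ?_⟩
  · intro i
    have : γ.symm '' Set.Icc (t i.castSucc) (t i.succ)
        = γ '' Set.Icc (unitInterval.symm (t i.succ)) (unitInterval.symm (t i.castSucc)) :=
      path_symm_image γ _ _
    rw [this]
    have e1 : unitInterval.symm (t i.succ) = unitInterval.symm (t i.rev.castSucc.rev) := by
      rw [Fin.rev_castSucc, Fin.rev_rev]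
    have e2 : unitInterval.symm (t i.castSucc) = unitInterval.symm (t i.rev.succ.rev) := by
      rw [Fin.rev_succ, Fin.rev_rev]
    rw [e1, e2]
    simpa using hγU i.rev
  · intro i
    have : γ.symm (t i) = γ (unitInterval.symm (t i)) := rfl
    rw [this]
    have e : unitInterval.symm (t i) = (fun j => unitInterval.symm (t j.rev)) i.rev := by
      simp [Fin.rev_rev]
    rw [e, hγt i.rev]
    simp only [Fin.rev_rev]
    rfl
  · obtain ⟨Hh⟩ := hγf
    exact ⟨Hh.symm₂⟩

/-- `HClose` holds for merely monotone partitions as well. -/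
lemma HClose.mono {a b : X} {f g : Path a b} (H : HClose f g)
    (n : ℕ) (t : Fin (n + 1) → I) (ht0 : t 0 = 0) (ht1 : t (Fin.last n) = 1)
    (htm : Monotone t) (U : Fin n → Set X) (hUo : ∀ i, IsOpen (U i))
    (hg : ∀ i : Fin n, g '' Set.Icc (t i.castSucc) (t i.succ) ⊆ U i) :
    ∃ γ : Path a b,
      (∀ i : Fin n, γ '' Set.Icc (t i.castSucc) (t i.succ) ⊆ U i) ∧
      (∀ i : Fin (n + 1), γ (t i) = g (t i)) ∧ γ.Homotopic f := by
  classical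
  set s : Finset I := Finset.image t Finset.univ with hs
  have hmem : ∀ i, t i ∈ s := fun i => Finset.mem_image.2 ⟨i, Finset.mem_univ _, rfl⟩
  have hne : s.Nonempty := ⟨t 0, hmem 0⟩
  obtain ⟨m, hm⟩ : ∃ m, s.card = m + 1 :=
    ⟨s.card - 1, (Nat.succ_pred_eq_of_pos (Finset.card_pos.2 hne)).symm⟩
  set T : Fin (m + 1) → I := fun j => s.orderEmbOfFin hm j with hT
  have hTmono : StrictMono T := (s.orderEmbOfFin hm).strictMono
  have hTmem : ∀ j, T j ∈ s := fun j => s.orderEmbOfFin_mem hm j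
  have hmemT : ∀ u ∈ s, ∃ j, T j = u := by
    intro u hu
    have : u ∈ Set.range (s.orderEmbOfFin hm) := by
      rw [Finset.range_orderEmbOfFin]; exact_mod_cast hu
    obtain ⟨j, hj⟩ := this
    exact ⟨j, hj⟩
  have htmemT : ∀ i, ∃ j, T j = t i := fun i => hmemT _ (hmem i)
  have hT0 : T 0 = 0 := by
    have : T 0 = s.min' hne := by
      have := Finset.orderEmbOfFin_zero hm (Nat.succ_pos m)
      convert this using 2
      exact Fin.ext (by simp)
    rw [this]
    exact le_antisymm (le_trans (Finset.min'_le s (t 0) (hmem 0)) (le_of_eq ht0))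
      unitInterval.nonneg'
  have hTlast : T (Fin.last m) = 1 := by
    have : T (Fin.last m) = s.max' hne := by
      have := Finset.orderEmbOfFin_last hm (Nat.succ_pos m)
      convert this using 2
      exact Fin.ext (by simp)
    rw [this]
    exact le_antisymm unitInterval.le_one'
      (le_trans (le_of_eq ht1.symm) (Finset.le_max' s (t (Fin.last n)) (hmem _)))
  -- the witness index for each subinterval of T
  have hwit : ∀ j : Fin m, ∃ i : Fin n, t i.castSucc = T j.castSucc ∧ t i.succ = T j.succ := by
    intro j
    obtain ⟨b', -, hb⟩ := Finset.mem_image.1 (hTmem j.succ)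
    have hcs : T j.castSucc < T j.succ := hTmono (Fin.castSucc_lt_succ (i := j))
    set P : Finset (Fin (n + 1)) := Finset.univ.filter (fun i => t i = T j.castSucc) with hP
    have hPne : P.Nonempty := by
      obtain ⟨a0, -, ha0⟩ := Finset.mem_image.1 (hTmem j.castSucc)
      exact ⟨a0, by simp [hP, ha0]⟩
    set A := P.max' hPne with hA
    have hAmem : t A = T j.castSucc := by
      exact (Finset.mem_filter.1 (P.max'_mem hPne)).2
    have hAb : A < b' := by
      by_contra hle
      push_neg at hle
      have := htm hle
      rw [hb, hAmem] at this
      exact absurd this (not_le.2 hcs)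
    have hAlast : A ≠ Fin.last n := by
      intro h
      rw [h] at hAb
      exact absurd hAb (not_lt.2 (Fin.le_last b'))
    refine ⟨A.castPred hAlast, ?_, ?_⟩
    · rw [Fin.castSucc_castPred]; exact hAmem
    · set i := A.castPred hAlast with hi
      have hic : i.castSucc = A := Fin.castSucc_castPred A hAlast
      have hub : t i.succ ≤ T j.succ := by
        have h1 : i.succ ≤ b' := Fin.castSucc_lt_iff_succ_le.1 (by rw [hic]; exact hAb)
        have := htm h1
        rwa [hb] at this
      have hlb : T j.castSucc < t i.succ := by
        have hge : t A ≤ t i.succ := htm (le_of_lt (by rw [← hic]; exact Fin.castSucc_lt_succ (i := i)))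
        have hle2 : T j.castSucc ≤ t i.succ := by rw [← hAmem]; exact hge
        rcases eq_or_lt_of_le hle2 with heq | hlt
        · exfalso
          have hmemP : i.succ ∈ P := by
            simp only [hP, Finset.mem_filter, Finset.mem_univ, true_and]
            exact heq.symm
          have := Finset.le_max' P i.succ hmemP
          rw [← hA] at this
          have h2 : A < i.succ := by rw [← hic]; exact Fin.castSucc_lt_succ (i := i)
          exact absurd this (not_le.2 h2)
        · exact hlt
      obtain ⟨j', hj'⟩ := htmemT i.succ
      have hjj : j.castSucc < j' := hTmono.lt_iff_lt.1 (by rw [hj']; exact hlb)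
      have hjs : T j.succ ≤ T j' := hTmono.monotone (Fin.castSucc_lt_iff_succ_le.1 hjj)
      rw [hj'] at hjs
      exact le_antisymm hub hjs
  -- uniqueness of the witness
  have huniq : ∀ (j : Fin m) (i₁ i₂ : Fin n),
      (t i₁.castSucc = T j.castSucc ∧ t i₁.succ = T j.succ) →
      (t i₂.castSucc = T j.castSucc ∧ t i₂.succ = T j.succ) → i₁ = i₂ := by
    intro j i₁ i₂ h₁ h₂
    by_contra hne
    have key : ∀ p' q' : Fin n,
        (t p'.castSucc = T j.castSucc ∧ t p'.succ = T j.succ) →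
        (t q'.castSucc = T j.castSucc ∧ t q'.succ = T j.succ) → p' < q' → False := by
      intro p' q' hp' hq' hpq
      have h1 : p'.succ ≤ q'.castSucc := Fin.succ_le_castSucc_iff.2 hpq
      have := htm h1
      rw [hp'.2, hq'.1] at this
      exact absurd this (not_le.2 (hTmono (Fin.castSucc_lt_succ (i := j))))
    rcases lt_or_gt_of_ne hne with h | h
    · exact key _ _ h₁ h₂ h
    · exact key _ _ h₂ h₁ h
  set w : Fin m → Fin n := fun j => (hwit j).choose with hw
  have hw1 : ∀ j, t (w j).castSucc = T j.castSucc := fun j => (hwit j).choose_spec.1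
  have hw2 : ∀ j, t (w j).succ = T j.succ := fun j => (hwit j).choose_spec.2
  obtain ⟨γ, hγU, hγT, hγf⟩ := H m T hT0 hTlast hTmono (fun j => U (w j))
    (fun j => hUo _)
    (by
      intro j
      rw [← hw1 j, ← hw2 j]
      exact hg (w j))
  have heqt : ∀ i, γ (t i) = g (t i) := by
    intro i
    obtain ⟨j, hj⟩ := htmemT i
    rw [← hj]
    exact hγT j
  refine ⟨γ, ?_, heqt, hγf⟩
  intro i
  rcases (htm (le_of_lt (Fin.castSucc_lt_succ (i := i)))).lt_or_eq with hlt | heq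
  · obtain ⟨j₁, hj₁⟩ := htmemT i.castSucc
    obtain ⟨j₂, hj₂⟩ := htmemT i.succ
    have hj12 : j₁ < j₂ := hTmono.lt_iff_lt.1 (by rw [hj₁, hj₂]; exact hlt)
    have hj₁last : j₁ ≠ Fin.last m := by
      intro h
      rw [h] at hj12
      exact absurd hj12 (not_lt.2 (Fin.le_last j₂))
    set j := j₁.castPred hj₁last with hjdef
    have hjc : j.castSucc = j₁ := Fin.castSucc_castPred j₁ hj₁last
    have hTc : T j.castSucc = t i.castSucc := by rw [hjc, hj₁]
    have hTs : T j.succ = t i.succ := by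
      have hub : T j.succ ≤ t i.succ := by
        have h1 : j.succ ≤ j₂ := Fin.castSucc_lt_iff_succ_le.1 (by rw [hjc]; exact hj12)
        have := hTmono.monotone h1
        rwa [hj₂] at this
      obtain ⟨a', -, ha'⟩ := Finset.mem_image.1 (hTmem j.succ)
      have h2 : t i.castSucc < t a' := by
        rw [ha', ← hTc]
        exact hTmono (Fin.castSucc_lt_succ (i := j))
      have h3 : i.castSucc < a' := by
        by_contra hle
        push_neg at hle
        exact absurd (htm hle) (not_le.2 h2)
      have h4 : i.succ ≤ a' := Fin.castSucc_lt_iff_succ_le.1 h3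
      have h5 : t i.succ ≤ t a' := htm h4
      rw [ha'] at h5
      exact le_antisymm hub h5
    have hwj : w j = i := huniq j (w j) i ⟨hw1 j, hw2 j⟩ ⟨hTc.symm, hTs.symm⟩
    have := hγU j
    rw [hTc, hTs, hwj] at this
    exact this
  · have hmm : t i.castSucc ∈ Set.Icc (t i.castSucc) (t i.succ) :=
      ⟨le_refl _, le_of_eq heq⟩
    intro y hy
    obtain ⟨u, hu, rfl⟩ := hy
    have hu' : u = t i.castSucc := le_antisymm (heq ▸ hu.2) hu.1
    rw [hu', heqt i.castSucc]
    exact hg i ⟨t i.castSucc, hmm, rfl⟩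

/-- the first-half reparametrization `I → I`, `u ↦ min (2u) 1`. -/
def σA (u : I) : I := Set.projIcc (0:ℝ) 1 zero_le_one (2 * (u:ℝ))

/-- the second-half reparametrization `I → I`, `u ↦ max (2u-1) 0`. -/
def σB (u : I) : I := Set.projIcc (0:ℝ) 1 zero_le_one (2 * (u:ℝ) - 1)

lemma σA_mono : Monotone σA := fun u v huv =>
  Set.monotone_projIcc zero_le_one (by
    have : (u:ℝ) ≤ (v:ℝ) := huv
    linarith)

lemma σB_mono : Monotone σB := fun u v huv =>
  Set.monotone_projIcc zero_le_one (by
    have : (u:ℝ) ≤ (v:ℝ) := huv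
    linarith)

lemma σA_of_le {u : I} (h : (u:ℝ) ≤ 1/2) :
    σA u = ⟨2 * (u:ℝ), ⟨by have := u.2.1; linarith, by linarith⟩⟩ :=
  Set.projIcc_of_mem _ ⟨by have := u.2.1; linarith, by linarith⟩

lemma σA_of_ge {u : I} (h : (1:ℝ)/2 ≤ (u:ℝ)) : σA u = 1 :=
  projIcc_eq_one.2 (by linarith)

lemma σB_of_le {u : I} (h : (u:ℝ) ≤ 1/2) : σB u = 0 :=
  projIcc_eq_zero.2 (by linarith)

lemma σB_of_ge {u : I} (h : (1:ℝ)/2 ≤ (u:ℝ)) :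
    σB u = ⟨2 * (u:ℝ) - 1, by constructor <;> [linarith; (have := u.2.2; linarith)]⟩ :=
  Set.projIcc_of_mem _ ⟨by linarith, by (have := u.2.2; linarith)⟩

lemma σA_zero : σA 0 = 0 := projIcc_eq_zero.2 (by norm_num)

lemma σA_one : σA 1 = 1 := σA_of_ge (by norm_num)

lemma σB_zero : σB 0 = 0 := σB_of_le (by norm_num)

lemma σB_one : σB 1 = 1 := projIcc_eq_one.2 (by norm_num)

lemma trans_apply_left {a b c : X} (g₁ : Path a b) (g₂ : Path b c) {u : I} (h : (u:ℝ) ≤ 1/2) :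
    (g₁.trans g₂) u = g₁ (σA u) := by
  rw [Path.trans_apply, dif_pos h, σA_of_le h]

lemma trans_apply_right {a b c : X} (g₁ : Path a b) (g₂ : Path b c) {u : I}
    (h : ¬ (u:ℝ) ≤ 1/2) :
    (g₁.trans g₂) u = g₂ (σB u) := by
  rw [Path.trans_apply, dif_neg h, σB_of_ge (le_of_lt (not_le.1 h))]

lemma trans_half {a b c : X} (g₁ : Path a b) (g₂ : Path b c) :
    (g₁.trans g₂) ⟨1/2, by norm_num⟩ = g₁ 1 := by
  have h : ((⟨1/2, by norm_num⟩ : I) : ℝ) ≤ 1/2 := le_refl _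
  rw [trans_apply_left g₁ g₂ h, σA_of_ge h]

lemma half_image₁ {a b c : X} (g₁ : Path a b) (g₂ : Path b c) {lo hi : I}
    (hlo : (lo:ℝ) ≤ 1/2) :
    g₁ '' Set.Icc (σA lo) (σA hi) ⊆ (g₁.trans g₂) '' Set.Icc lo hi := by
  rintro _ ⟨v, ⟨hv1, hv2⟩, rfl⟩
  by_cases hcase : (v:ℝ) < 1
  · have hv0 : (0:ℝ) ≤ (v:ℝ) := v.2.1
    set u : I := ⟨(v:ℝ)/2, by constructor <;> linarith⟩ with hu
    have hlou : lo ≤ u := by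
      rw [σA_of_le hlo] at hv1
      have h2 : 2*(lo:ℝ) ≤ (v:ℝ) := hv1
      rw [← Subtype.coe_le_coe]
      show (lo:ℝ) ≤ (v:ℝ)/2
      linarith
    have huhi : u ≤ hi := by
      by_cases hhi : (hi:ℝ) ≤ 1/2
      · rw [σA_of_le hhi] at hv2
        have h2 : (v:ℝ) ≤ 2*(hi:ℝ) := hv2
        rw [← Subtype.coe_le_coe]
        show (v:ℝ)/2 ≤ (hi:ℝ)
        linarith
      · push_neg at hhi
        rw [← Subtype.coe_le_coe]
        show (v:ℝ)/2 ≤ (hi:ℝ)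
        linarith
    refine ⟨u, ⟨hlou, huhi⟩, ?_⟩
    have h3 : (u:ℝ) ≤ 1/2 := by
      show (v:ℝ)/2 ≤ 1/2
      linarith
    rw [trans_apply_left g₁ g₂ h3, σA_of_le h3]
    congr 1
    apply Subtype.ext
    show 2 * ((v:ℝ)/2) = (v:ℝ)
    ring
  · push_neg at hcase
    have hv1' : (v:ℝ) = 1 := le_antisymm v.2.2 hcase
    set u : I := ⟨1/2, by norm_num⟩ with hu
    have hhi2 : (1:ℝ)/2 ≤ (hi:ℝ) := by
      by_contra hc
      push_neg at hc
      rw [σA_of_le (le_of_lt hc)] at hv2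
      have h2 : (v:ℝ) ≤ 2*(hi:ℝ) := hv2
      linarith
    refine ⟨u, ⟨hlo, hhi2⟩, ?_⟩
    rw [trans_half]
    congr 1
    apply Subtype.ext
    exact hv1'.symm

lemma half_image₂ {a b c : X} (g₁ : Path a b) (g₂ : Path b c) {lo hi : I}
    (hhi : (1:ℝ)/2 ≤ (hi:ℝ)) :
    g₂ '' Set.Icc (σB lo) (σB hi) ⊆ (g₁.trans g₂) '' Set.Icc lo hi := by
  rintro _ ⟨v, ⟨hv1, hv2⟩, rfl⟩
  by_cases hcase : 0 < (v:ℝ)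
  · have hv1'' : (v:ℝ) ≤ 1 := v.2.2
    set u : I := ⟨((v:ℝ)+1)/2, by constructor <;> linarith⟩ with hu
    have huhi : u ≤ hi := by
      rw [σB_of_ge hhi] at hv2
      have h2 : (v:ℝ) ≤ 2*(hi:ℝ) - 1 := hv2
      rw [← Subtype.coe_le_coe]
      show ((v:ℝ)+1)/2 ≤ (hi:ℝ)
      linarith
    have hlou : lo ≤ u := by
      by_cases hlo : (lo:ℝ) ≤ 1/2
      · rw [← Subtype.coe_le_coe]
        show (lo:ℝ) ≤ ((v:ℝ)+1)/2
        linarith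
      · push_neg at hlo
        rw [σB_of_ge (le_of_lt hlo)] at hv1
        have h2 : 2*(lo:ℝ) - 1 ≤ (v:ℝ) := hv1
        rw [← Subtype.coe_le_coe]
        show (lo:ℝ) ≤ ((v:ℝ)+1)/2
        linarith
    refine ⟨u, ⟨hlou, huhi⟩, ?_⟩
    have h3 : ¬ (u:ℝ) ≤ 1/2 := by
      show ¬ ((v:ℝ)+1)/2 ≤ 1/2
      push_neg
      linarith
    rw [trans_apply_right g₁ g₂ h3, σB_of_ge (le_of_lt (not_le.1 h3))]
    congr 1
    apply Subtype.ext
    show 2 * (((v:ℝ)+1)/2) - 1 = (v:ℝ)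
    ring
  · push_neg at hcase
    have hv0 : (v:ℝ) = 0 := le_antisymm hcase v.2.1
    set u : I := ⟨1/2, by norm_num⟩ with hu
    have hlo2 : (lo:ℝ) ≤ 1/2 := by
      by_contra hc
      push_neg at hc
      rw [σB_of_ge (le_of_lt hc)] at hv1
      have h2 : 2*(lo:ℝ) - 1 ≤ (v:ℝ) := hv1
      linarith
    refine ⟨u, ⟨hlo2, hhi⟩, ?_⟩
    rw [trans_half, g₁.target]
    have : g₂ v = g₂ 0 := by
      congr 1
      apply Subtype.ext
      exact hv0
    rw [this, g₂.source]

lemma HClose.trans {a b c : X} {f₁ g₁ : Path a b} {f₂ g₂ : Path b c}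
    (H₁ : HClose f₁ g₁) (H₂ : HClose f₂ g₂) : HClose (f₁.trans f₂) (g₁.trans g₂) := by
  intro n t ht0 ht1 htm U hUo hg
  obtain ⟨γ₁, hγ₁U, hγ₁t, hγ₁f⟩ := HClose.mono H₁ n (fun i => σA (t i))
    (by show σA (t 0) = 0; rw [ht0]; exact σA_zero)
    (by show σA (t (Fin.last n)) = 1; rw [ht1]; exact σA_one)
    (fun i j hij => σA_mono (htm.monotone hij))
    (fun i => if (1:ℝ)/2 < (t i.castSucc : ℝ) then Set.univ else U i)
    (by
      intro i
      show IsOpen (if (1:ℝ)/2 < (t i.castSucc : ℝ) then Set.univ else U i)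
      split_ifs
      exacts [isOpen_univ, hUo i])
    (by
      intro i
      show g₁ '' Set.Icc (σA (t i.castSucc)) (σA (t i.succ))
        ⊆ if (1:ℝ)/2 < (t i.castSucc : ℝ) then Set.univ else U i
      by_cases h : (1:ℝ)/2 < (t i.castSucc : ℝ)
      · rw [if_pos h]; exact Set.subset_univ _
      · rw [if_neg h]
        push_neg at h
        exact (half_image₁ g₁ g₂ h).trans (hg i))
  obtain ⟨γ₂, hγ₂U, hγ₂t, hγ₂f⟩ := HClose.mono H₂ n (fun i => σB (t i))
    (by show σB (t 0) = 0; rw [ht0]; exact σB_zero)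
    (by show σB (t (Fin.last n)) = 1; rw [ht1]; exact σB_one)
    (fun i j hij => σB_mono (htm.monotone hij))
    (fun i => if ((t i.succ : ℝ)) < 1/2 then Set.univ else U i)
    (by
      intro i
      show IsOpen (if ((t i.succ : ℝ)) < 1/2 then Set.univ else U i)
      split_ifs
      exacts [isOpen_univ, hUo i])
    (by
      intro i
      show g₂ '' Set.Icc (σB (t i.castSucc)) (σB (t i.succ))
        ⊆ if ((t i.succ : ℝ)) < 1/2 then Set.univ else U i
      by_cases h : ((t i.succ : ℝ)) < 1/2
      · rw [if_pos h]; exact Set.subset_univ _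
      · rw [if_neg h]
        push_neg at h
        exact (half_image₂ g₁ g₂ h).trans (hg i))
  refine ⟨γ₁.trans γ₂, ?_, ?_, Path.Homotopic.hcomp hγ₁f hγ₂f⟩
  · rintro i _ ⟨u, hu, rfl⟩
    by_cases h : (u:ℝ) ≤ 1/2
    · rw [trans_apply_left γ₁ γ₂ h]
      have h1 : ¬ (1:ℝ)/2 < (t i.castSucc : ℝ) := by
        push_neg
        have h2 : (t i.castSucc : ℝ) ≤ (u:ℝ) := hu.1
        linarith
      have hmem : σA u ∈ Set.Icc (σA (t i.castSucc)) (σA (t i.succ)) :=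
        ⟨σA_mono hu.1, σA_mono hu.2⟩
      have := hγ₁U i ⟨σA u, hmem, rfl⟩
      rwa [if_neg h1] at this
    · rw [trans_apply_right γ₁ γ₂ h]
      have h1 : ¬ ((t i.succ : ℝ)) < 1/2 := by
        push_neg at h ⊢
        have h2 : (u:ℝ) ≤ (t i.succ : ℝ) := hu.2
        linarith
      have hmem : σB u ∈ Set.Icc (σB (t i.castSucc)) (σB (t i.succ)) :=
        ⟨σB_mono hu.1, σB_mono hu.2⟩
      have := hγ₂U i ⟨σB u, hmem, rfl⟩
      rwa [if_neg h1] at this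
  · intro i
    by_cases h : (t i : ℝ) ≤ 1/2
    · rw [trans_apply_left γ₁ γ₂ h, trans_apply_left g₁ g₂ h]
      exact hγ₁t i
    · rw [trans_apply_right γ₁ γ₂ h, trans_apply_right g₁ g₂ h]
      exact hγ₂t i

/-- subpath of γ recast to endpoints on h -/
def pA {x : X} (γ h : Path x x) (s : I) (hm : γ s = h s) : Path x (h s) :=
  (subp γ 0 s).cast γ.source.symm hm.symm

def pB {x : X} (h : Path x x) (s : I) : Path x (h s) :=
  (subp h 0 s).cast h.source.symm rfl

def pM {x : X} (γ h : Path x x) (s u : I) (hs : γ s = h s) (hu : γ u = h u) :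
    Path (h s) (h u) :=
  (subp γ s u).cast hs.symm hu.symm

lemma pA_split {x : X} (γ h : Path x x) (s u : I) (hs : γ s = h s) (hu : γ u = h u) :
    (pA γ h u hu).Homotopic ((pA γ h s hs).trans (pM γ h s u hs hu)) :=
  split_homotopic γ ((0:I):ℝ) (s:ℝ) (u:ℝ) _ _ _
    (fun _ => rfl) (fun _ => rfl) (fun _ => rfl)

lemma pB_split {x : X} (h : Path x x) (s u : I) :
    (pB h u).Homotopic ((pB h s).trans (subp h s u)) :=
  split_homotopic h ((0:I):ℝ) (s:ℝ) (u:ℝ) _ _ _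
    (fun _ => rfl) (fun _ => rfl) (fun _ => rfl)

lemma loop_cancel {x y : X} (p : Path x y) : pathClass (p.trans p.symm) = 1 := by
  rw [← pathClass_refl x]
  apply pathClass_eq
  rw [hq_trans, hq_symm, IsIso.hom_inv_id]
  exact (FundamentalGroupoid.id_eq_path_refl _).symm

/-- the telescoping argument -/
lemma telescope {x : X} {𝒰 : Set (Set X)} (n : ℕ) (t : Fin (n+1) → I)
    (ht0 : t 0 = 0) (ht1 : t (Fin.last n) = 1) (htm : Monotone t)
    (γ h : Path x x) (hmatch : ∀ i, γ (t i) = h (t i)) (hh1 : pathClass h = 1)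
    (U : Fin n → Set X) (hU𝒰 : ∀ i, U i ∈ 𝒰)
    (hγU : ∀ i : Fin n, γ '' Set.Icc (t i.castSucc) (t i.succ) ⊆ U i)
    (hhU : ∀ i : Fin n, h '' Set.Icc (t i.castSucc) (t i.succ) ⊆ U i) :
    pathClass γ ∈ spanierCover x 𝒰 := by
  have main : ∀ j : Fin (n+1),
      pathClass ((pA γ h (t j) (hmatch j)).trans (pB h (t j)).symm) ∈ spanierCover x 𝒰 := by
    intro j
    induction j using Fin.induction with
    | zero =>
        have hAB : pA γ h (t 0) (hmatch 0) = pB h (t 0) := by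
          ext u
          show γ.extend ((1 - (u:ℝ)) * ((0:I):ℝ) + (u:ℝ) * ((t 0):ℝ))
            = h.extend ((1 - (u:ℝ)) * ((0:I):ℝ) + (u:ℝ) * ((t 0):ℝ))
          rw [ht0]
          norm_num
        rw [hAB, loop_cancel]
        exact one_mem _
    | succ i ih =>
        have hle : t i.castSucc ≤ t i.succ := htm (le_of_lt (Fin.castSucc_lt_succ (i := i)))
        set A' := pM γ h (t i.castSucc) (t i.succ) (hmatch _) (hmatch _) with hA'
        set B' := subp h (t i.castSucc) (t i.succ) with hB'
        set v := A'.trans B'.symm with hv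
        have hrange : Set.range v ⊆ U i := by
          rw [hv, Path.trans_range, Path.symm_range]
          apply Set.union_subset
          · have hre : Set.range A' = Set.range (subp γ (t i.castSucc) (t i.succ)) := rfl
            rw [hre]
            exact (range_subp_subset γ hle).trans (hγU i)
          · exact (range_subp_subset h hle).trans (hhU i)
        have hgen : pathClass (((pB h (t i.castSucc)).trans v).trans (pB h (t i.castSucc)).symm)
            ∈ spanierCover x 𝒰 :=
          Subgroup.subset_closure
            ⟨h (t i.castSucc), pB h (t i.castSucc), v, U i, hU𝒰 i, hrange, rfl⟩
        have e1 : hq (pA γ h (t i.succ) (hmatch _))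
            = hq ((pA γ h (t i.castSucc) (hmatch _)).trans A') :=
          hq_eq_of_homotopic (pA_split γ h _ _ _ _)
        have e2 : hq (pB h (t i.succ)) = hq ((pB h (t i.castSucc)).trans B') :=
          hq_eq_of_homotopic (pB_split h _ _)
        have key : pathClass ((pA γ h (t i.succ) (hmatch _)).trans (pB h (t i.succ)).symm)
            = pathClass (((pB h (t i.castSucc)).trans v).trans (pB h (t i.castSucc)).symm)
              * pathClass ((pA γ h (t i.castSucc) (hmatch _)).trans (pB h (t i.castSucc)).symm) := by
          rw [pathClass_mul]
          apply pathClass_eq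
          simp only [hq_trans, hq_symm, e1, e2, hv]
          simp
        rw [key]
        exact mul_mem hgen ih
  have e : h (t (Fin.last n)) = x := by rw [ht1]; exact h.target
  have eg : γ (t (Fin.last n)) = x := by rw [ht1]; exact γ.target
  have hAlast : pA γ h (t (Fin.last n)) (hmatch _) = γ.cast rfl e := by
    ext u
    show γ.extend ((1 - (u:ℝ)) * ((0:I):ℝ) + (u:ℝ) * ((t (Fin.last n)):ℝ)) = γ u
    rw [ht1]
    norm_num
  have hBlast : pB h (t (Fin.last n)) = h.cast rfl e := by
    ext u
    show h.extend ((1 - (u:ℝ)) * ((0:I):ℝ) + (u:ℝ) * ((t (Fin.last n)):ℝ)) = h u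
    rw [ht1]
    norm_num
  have hfinal : pathClass γ
      = pathClass h * pathClass ((pA γ h (t (Fin.last n)) (hmatch _)).trans
          (pB h (t (Fin.last n))).symm) := by
    rw [pathClass_mul]
    apply pathClass_eq
    rw [hAlast, hBlast]
    simp only [hq_trans, hq_symm, hq_cast]
    simp
  rw [hfinal, hh1, one_mul]
  exact main (Fin.last n)

end StmtAux

/-- `π₁^sg(X, x) ≤ π₁^qs(X, x) ≤ π₁^sp(X, x)`. -/
theorem stmt13 (x : X) :
    (smallGenerated x : Set (FundamentalGroup X x)) ⊆ qs x ∧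
      qs x ⊆ (spanierGroup x : Set (FundamentalGroup X x)) := by
  classical
  constructor
  · -- part 1 : smallGenerated ⊆ qs
    intro p hp
    rw [SetLike.mem_coe, smallGenerated] at hp
    refine Subgroup.closure_induction ?_ ?_ ?_ ?_ hp
    · rintro q ⟨y, β, α, hα, rfl⟩
      refine ⟨(β.trans α).trans β.symm, (β.trans (Path.refl y)).trans β.symm, rfl, ?_, ?_⟩
      · have h1 : ((β.trans (Path.refl y)).trans β.symm).Homotopic (Path.refl x) := by
          have h2 : (β.trans (Path.refl y)).Homotopic β := ⟨Path.Homotopy.transRefl β⟩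
          have h3 : ((β.trans (Path.refl y)).trans β.symm).Homotopic (β.trans β.symm) :=
            Path.Homotopic.hcomp h2 (Path.Homotopic.refl β.symm)
          exact h3.trans ⟨(Path.Homotopy.reflTransSymm β).symm⟩
        have : pathClass ((β.trans (Path.refl y)).trans β.symm) = 1 := by
          rw [StmtAux.pathClass_eq_of_homotopic h1, StmtAux.pathClass_refl]
        simp [this, Subgroup.mem_bot]
      · exact StmtAux.HClose.trans (StmtAux.HClose.trans (StmtAux.HClose.refl' β) hα)
          (StmtAux.HClose.symm' (StmtAux.HClose.refl' β))
    · exact ⟨Path.refl x, Path.refl x, StmtAux.pathClass_refl x, by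
        simp [StmtAux.pathClass_refl, Subgroup.mem_bot], StmtAux.HClose.refl' _⟩
    · rintro q r - - ⟨f₁, h₁, hq1, hb1, hcl1⟩ ⟨f₂, h₂, hq2, hb2, hcl2⟩
      refine ⟨f₂.trans f₁, h₂.trans h₁, ?_, ?_, StmtAux.HClose.trans hcl2 hcl1⟩
      · rw [← StmtAux.pathClass_mul, hq1, hq2]
      · rw [SetLike.mem_coe, Subgroup.mem_bot] at hb1 hb2 ⊢
        rw [← StmtAux.pathClass_mul, hb1, hb2, one_mul]
    · rintro q - ⟨f, h, hq1, hb1, hcl1⟩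
      refine ⟨f.symm, h.symm, ?_, ?_, StmtAux.HClose.symm' hcl1⟩
      · rw [StmtAux.pathClass_symm, hq1]
      · rw [SetLike.mem_coe, Subgroup.mem_bot] at hb1 ⊢
        rw [StmtAux.pathClass_symm, hb1, inv_one]
  · -- part 2 : qs ⊆ spanierGroup
    rintro p ⟨f, h, rfl, hbot, hcl⟩
    have hh1 : pathClass h = 1 := by
      rwa [SetLike.mem_coe, Subgroup.mem_bot] at hbot
    rw [SetLike.mem_coe, spanierGroup]
    refine Subgroup.mem_iInf.2 fun 𝒰 => Subgroup.mem_iInf.2 fun hopen =>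
      Subgroup.mem_iInf.2 fun hcover => ?_
    -- Lebesgue number
    have hcov : (Set.univ : Set I) ⊆ ⋃ (U : 𝒰), h ⁻¹' (U : Set X) := by
      intro u _
      have hxm : h u ∈ ⋃₀ 𝒰 := by rw [hcover]; trivial
      obtain ⟨U, hU, hx⟩ := hxm
      exact Set.mem_iUnion.2 ⟨⟨U, hU⟩, hx⟩
    obtain ⟨δ, hδ, hball⟩ := lebesgue_number_lemma_of_metric isCompact_univ
      (fun U : 𝒰 => (hopen _ U.2).preimage h.continuous) hcov
    obtain ⟨N, hN⟩ : ∃ N : ℕ, 1/((N:ℝ)+1) < δ := exists_nat_one_div_lt hδ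
    set n := N + 1 with hn
    have hnpos : (0:ℝ) < (n:ℝ) := by positivity
    set t : Fin (n+1) → I := fun i => ⟨(i:ℝ)/(n:ℝ), by
      constructor
      · positivity
      · rw [div_le_one hnpos]
        exact_mod_cast Nat.lt_succ_iff.mp i.2⟩ with ht
    have ht0 : t 0 = 0 := by
      apply Subtype.ext
      show ((0:Fin (n+1)):ℝ)/(n:ℝ) = 0
      norm_num
    have ht1 : t (Fin.last n) = 1 := by
      apply Subtype.ext
      show ((Fin.last n : Fin (n+1)):ℝ)/(n:ℝ) = 1
      rw [Fin.val_last]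
      field_simp
    have htm : StrictMono t := by
      intro i j hij
      rw [← Subtype.coe_lt_coe]
      show (i:ℝ)/(n:ℝ) < (j:ℝ)/(n:ℝ)
      have hij' : ((i:ℕ):ℝ) < ((j:ℕ):ℝ) := by exact_mod_cast hij
      have hmul := mul_lt_mul_of_pos_right hij' (inv_pos.2 hnpos)
      simpa [div_eq_mul_inv] using hmul
    have hUex : ∀ i : Fin n, ∃ U ∈ 𝒰, h '' Set.Icc (t i.castSucc) (t i.succ) ⊆ U := by
      intro i
      obtain ⟨⟨U, hU⟩, hsub⟩ := hball (t i.castSucc) trivial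
      refine ⟨U, hU, ?_⟩
      rw [Set.image_subset_iff]
      intro u hu
      apply hsub
      rw [Metric.mem_ball, Subtype.dist_eq, Real.dist_eq]
      have h1 : (t i.castSucc : ℝ) ≤ (u:ℝ) := hu.1
      have h2 : (u:ℝ) ≤ (t i.succ : ℝ) := hu.2
      have h3 : (t i.succ : ℝ) - (t i.castSucc : ℝ) = 1/(n:ℝ) := by
        show ((i.succ : Fin (n+1)):ℝ)/(n:ℝ) - ((i.castSucc : Fin (n+1)):ℝ)/(n:ℝ) = 1/(n:ℝ)
        rw [Fin.val_succ, Fin.coe_castSucc]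
        push_cast
        field_simp
        ring
      rw [abs_sub_lt_iff]
      constructor
      · have : 1/(n:ℝ) < δ := by
          rw [hn]
          push_cast
          exact_mod_cast hN
        linarith
      · linarith
    choose U hU𝒰 hUsub using hUex
    obtain ⟨γ, hγU, hγt, hγf⟩ := hcl n t ht0 ht1 htm U (fun i => hopen _ (hU𝒰 i)) hUsub
    have : pathClass f = pathClass γ := (StmtAux.pathClass_eq_of_homotopic hγf).symm
    rw [this]
    exact StmtAux.telescope n t ht0 ht1 htm.monotone γ h hγt hh1 U hU𝒰 hγU hUsub
end
end

section
/- Let X be a topological space and x ∈ X. If the quasi-small loop group π₁^qs(X, x) is trivial, then X is homotopically path Hausdorff relative to the trivial subgroup of π₁(X, x) (i.e., for every pair of non-homotopic paths α, β starting at x with α(1) = β(1), there exist a partition 0 = t₀ < ⋯ < t_n = 1 and open sets U₁, …, U_n with α([t_{i-1}, t_i]) ⊆ U_i such that every path γ with γ([t_{i-1}, t_i]) ⊆ U_i and γ(t_i) = α(t_i) for all i is not homotopic to β rel ∂I). -/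
open unitInterval

noncomputable section

attribute [local instance] Path.Homotopic.setoid

variable {X Y : Type*} [TopologicalSpace X] [TopologicalSpace Y]

lemma pathClass_eq_one_iff {x : X} (f : Path x x) :
    pathClass f = 1 ↔ f.Homotopic (Path.refl x) := by
  constructor
  · intro h
    have h2 : pathClass f = (1 : FundamentalGroup X x) := h
    have h3 : (⟦f⟧ : Path.Homotopic.Quotient x x) = ⟦Path.refl x⟧ := h2
    exact Quotient.exact h3
  · intro h
    have h3 : (⟦f⟧ : Path.Homotopic.Quotient x x) = ⟦Path.refl x⟧ := Quotient.sound h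
    exact h3

lemma homotopic_of_trans_symm {x y : X} {p q : Path x y}
    (h : (p.trans q.symm).Homotopic (Path.refl x)) : p.Homotopic q := by
  have h1 : ((p.trans q.symm).trans q).Homotopic ((Path.refl x).trans q) :=
    h.hcomp (Path.Homotopic.refl q)
  have h2 : (p.trans (q.symm.trans q)).Homotopic ((p.trans q.symm).trans q) :=
    ⟨(Path.Homotopy.transAssoc p q.symm q).symm⟩
  have h3 : (p.trans (Path.refl y)).Homotopic (p.trans (q.symm.trans q)) :=
    (Path.Homotopic.refl p).hcomp ⟨Path.Homotopy.reflSymmTrans q⟩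
  have h4 : p.Homotopic (p.trans (Path.refl y)) := ⟨(Path.Homotopy.transRefl p).symm⟩
  have h5 : ((Path.refl x).trans q).Homotopic q := ⟨Path.Homotopy.reflTrans q⟩
  exact (((h4.trans h3).trans h2).trans h1).trans h5

lemma trans_apply_of_le_half {x y z : X} (p : Path x y) (q : Path y z) (w u : I)
    (hw : (w : ℝ) ≤ 1 / 2) (hu : (u : ℝ) = 2 * (w : ℝ)) : (p.trans q) w = p u := by
  rw [Path.trans_apply, dif_pos hw]
  congr 1
  exact Subtype.ext hu.symm

lemma trans_apply_of_half_le {x y z : X} (p : Path x y) (q : Path y z) (w u : I)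
    (hw : 1 / 2 ≤ (w : ℝ)) (hu : (u : ℝ) = 2 * (w : ℝ) - 1) : (p.trans q) w = q u := by
  rcases eq_or_lt_of_le hw with he | hl
  · rw [Path.trans_apply, dif_pos (le_of_eq he.symm)]
    have hp : ∀ v : I, (v : ℝ) = 1 → p v = y := by
      intro v hv
      have : v = 1 := Subtype.ext (by rw [hv]; rfl)
      rw [this, p.target]
    have hq0 : q u = y := by
      have : u = 0 := Subtype.ext (by rw [hu, ← he]; norm_num)
      rw [this, q.source]
    rw [hq0]
    exact hp _ (by show 2 * (w : ℝ) = 1; rw [← he]; norm_num)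
  · rw [Path.trans_apply, dif_neg (not_le.2 hl)]
    congr 1
    exact Subtype.ext hu.symm

lemma trans_symm_apply_of_half_le {x y : X} (p q : Path x y) (w u : I)
    (hw : 1 / 2 ≤ (w : ℝ)) (hu : (u : ℝ) = 2 - 2 * (w : ℝ)) : (p.trans q.symm) w = q u := by
  rw [trans_apply_of_half_le p q.symm w (σ u) hw
    (by rw [unitInterval.coe_symm_eq, hu]; ring)]
  show q (σ (σ u)) = q u
  rw [unitInterval.symm_symm]

/-- if `π₁^qs(X, x)` is trivial, then `X` is homotopically path
Hausdorff relative to the trivial subgroup of `π₁(X, x)`. -/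
theorem stmt14 (x : X) (h : qs x = {(1 : FundamentalGroup X x)}) :
    HPHausdorffRel x ((⊥ : Subgroup (FundamentalGroup X x)) : Set (FundamentalGroup X x)) := by
  intro y α β hne
  by_contra hcon
  push_neg at hcon
  apply hne
  have hq : pathClass (α.trans β.symm) ∈ qs x := by
    refine ⟨α.trans β.symm, α.trans α.symm, rfl, ?_, ?_⟩
    · show pathClass (α.trans α.symm) ∈ (⊥ : Subgroup (FundamentalGroup X x))
      rw [Subgroup.mem_bot, pathClass_eq_one_iff]
      exact ⟨(Path.Homotopy.reflTransSymm α).symm⟩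
    · intro n t ht0 ht1 htm U hUo hUc
      classical
      have htub : ∀ i : Fin (n + 1), (t i : ℝ) ≤ 1 := fun i => (t i).2.2
      have htm' : ∀ a b : Fin (n + 1), a.val ≤ b.val → (t a : ℝ) ≤ t b := fun a b hab =>
        Subtype.coe_le_coe.mpr (htm.monotone (Fin.le_def.mpr hab))
      have htm'' : ∀ a b : Fin (n + 1), a.val < b.val → (t a : ℝ) < t b := fun a b hab =>
        Subtype.coe_lt_coe.mpr (htm (Fin.lt_def.mpr hab))
      have hex : ∃ i : ℕ, ∃ hi : i < n + 1, (1 / 2 : ℝ) < (t ⟨i, hi⟩ : ℝ) := by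
        refine ⟨n, n.lt_succ_self, ?_⟩
        have e : (⟨n, n.lt_succ_self⟩ : Fin (n + 1)) = Fin.last n := rfl
        rw [e, ht1]
        norm_num
      obtain ⟨k, hk1, hk2, hkmin⟩ : ∃ k, ∃ hk1 : k < n + 1,
          ((1 / 2 : ℝ) < (t ⟨k, hk1⟩ : ℝ)) ∧
          ∀ j (hj : j < n + 1), j < k → (t ⟨j, hj⟩ : ℝ) ≤ 1 / 2 := by
        obtain ⟨hk1, hk2⟩ := Nat.find_spec hex
        exact ⟨Nat.find hex, hk1, hk2, fun j hj hjk => by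
          by_contra hcc
          exact Nat.find_min hex hjk ⟨hj, not_le.1 hcc⟩⟩
      have hkn : k ≤ n := by omega
      have hk0 : 1 ≤ k := by
        by_contra hcc
        have hk00 : k = 0 := by omega
        subst hk00
        have e : (⟨0, hk1⟩ : Fin (n + 1)) = 0 := rfl
        rw [e, ht0] at hk2
        norm_num at hk2
      have hn1 : 1 ≤ n := by omega
      have hklt : ∀ i : Fin (n + 1), k ≤ i.val → (1 / 2 : ℝ) < t i := fun i hi =>
        lt_of_lt_of_le hk2 (htm' ⟨k, hk1⟩ i hi)
      have hmem : ∀ i : Fin (n + 1), min 1 (2 - 2 * (t i : ℝ)) ∈ I := by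
        intro i
        constructor
        · apply le_min
          · norm_num
          · have := htub i; linarith
        · exact min_le_left _ _
      set M := n - k + 1 with hM
      let s : Fin (M + 1) → I := fun j => ⟨_, hmem ⟨n - j.val, by omega⟩⟩
      have hsv : ∀ j : Fin (M + 1),
          (s j : ℝ) = min 1 (2 - 2 * (t ⟨n - j.val, by omega⟩ : ℝ)) := fun j => rfl
      have hs0 : s 0 = 0 := by
        apply Subtype.ext
        rw [hsv]
        have e : (⟨n - (0 : Fin (M + 1)).val, by omega⟩ : Fin (n + 1)) = Fin.last n := by
          ext; simp
        rw [e, ht1]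
        norm_num
      have hslast : s (Fin.last M) = 1 := by
        apply Subtype.ext
        rw [hsv]
        have e : (⟨n - (Fin.last M).val, by omega⟩ : Fin (n + 1)) = ⟨k - 1, by omega⟩ := by
          ext; simp [Fin.last]; omega
        rw [e]
        have hle := hkmin (k - 1) (by omega) (by omega)
        have : ((1 : I) : ℝ) = 1 := rfl
        rw [this]
        rw [min_eq_left (by linarith)]
      have hsmono : StrictMono s := by
        intro a b hab
        show (s a : ℝ) < (s b : ℝ)
        rw [hsv a, hsv b]
        have hab' : a.val < b.val := Fin.lt_def.mp hab
        have hbM : b.val ≤ M := by omega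
        have h1 : k ≤ n - a.val := by omega
        have h2 := hklt ⟨n - a.val, by omega⟩ h1
        have h3 : (t ⟨n - b.val, by omega⟩ : ℝ) < t ⟨n - a.val, by omega⟩ :=
          htm'' _ _ (by simp; omega)
        rw [lt_min_iff]
        constructor
        · exact lt_of_le_of_lt (min_le_right _ _) (by linarith)
        · exact lt_of_le_of_lt (min_le_right _ _) (by linarith)
      let V : Fin M → Set X := fun j => U ⟨n - 1 - j.val, by omega⟩
      have hVo : ∀ j, IsOpen (V j) := fun j => hUo _
      have hVc : ∀ j : Fin M, α '' Set.Icc (s j.castSucc) (s j.succ) ⊆ V j := by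
        intro j z hz
        obtain ⟨u, hu, rfl⟩ := hz
        have hjM : j.val < M := j.2
        have hu1 : (s j.castSucc : ℝ) ≤ u := Subtype.coe_le_coe.mpr hu.1
        have hu2 : (u : ℝ) ≤ s j.succ := Subtype.coe_le_coe.mpr hu.2
        rw [hsv] at hu1 hu2
        have hcs : j.castSucc.val = j.val := rfl
        have hss : j.succ.val = j.val + 1 := rfl
        -- t at index n - j.val is > 1/2
        have hknj : k ≤ n - j.val := by omega
        have htgt := hklt ⟨n - j.castSucc.val, by omega⟩
          (by show k ≤ n - j.castSucc.val; rw [hcs]; exact hknj)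
        have hmin1 : min 1 (2 - 2 * (t ⟨n - j.castSucc.val, by omega⟩ : ℝ)) =
            2 - 2 * (t ⟨n - j.castSucc.val, by omega⟩ : ℝ) := min_eq_right (by linarith)
        rw [hmin1] at hu1
        have hu2' : (u : ℝ) ≤ 2 - 2 * (t ⟨n - j.succ.val, by omega⟩ : ℝ) :=
          le_trans hu2 (min_le_right _ _)
        -- define w = 1 - u/2
        have huI : (0 : ℝ) ≤ u ∧ (u : ℝ) ≤ 1 := ⟨u.2.1, u.2.2⟩
        set w : I := ⟨1 - (u : ℝ) / 2, by constructor <;> [linarith [huI.2]; linarith [huI.1]]⟩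
          with hwdef
        have hw2 : 1 / 2 ≤ (w : ℝ) := by
          show 1 / 2 ≤ 1 - (u : ℝ) / 2; linarith [huI.2]
        have heval : (α.trans α.symm) w = α u :=
          trans_symm_apply_of_half_le α α w u hw2 (by show (u:ℝ) = 2 - 2*(1 - (u:ℝ)/2); ring)
        set i0 : Fin n := ⟨n - 1 - j.val, by omega⟩ with hi0
        have hwmem : w ∈ Set.Icc (t i0.castSucc) (t i0.succ) := by
          constructor
          · show (t i0.castSucc : ℝ) ≤ 1 - (u : ℝ) / 2
            have e : i0.castSucc = (⟨n - j.succ.val, by omega⟩ : Fin (n + 1)) := by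
              ext; simp [hi0, hss]; omega
            rw [e]
            linarith [hu2']
          · show (1 : ℝ) - (u : ℝ) / 2 ≤ (t i0.succ : ℝ)
            have e : i0.succ = (⟨n - j.castSucc.val, by omega⟩ : Fin (n + 1)) := by
              ext; simp [hi0, hcs]; omega
            rw [e]
            linarith [hu1]
        rw [← heval]
        exact hUc i0 ⟨w, hwmem, rfl⟩
      obtain ⟨δ, hδU, hδpt, hδmem⟩ := hcon M s hs0 hslast hsmono V hVo hVc
      rw [SetLike.mem_coe, Subgroup.mem_bot, pathClass_eq_one_iff] at hδmem
      have hδβ : δ.Homotopic β := homotopic_of_trans_symm hδmem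
      refine ⟨α.trans δ.symm, ?_, ?_, ?_⟩
      · -- image condition
        intro i z hz
        obtain ⟨w, hw, rfl⟩ := hz
        by_cases hw2 : (w : ℝ) ≤ 1 / 2
        · have humem : (2 * (w : ℝ)) ∈ I := ⟨by linarith [w.2.1], by linarith⟩
          have e1 := trans_apply_of_le_half α δ.symm w ⟨_, humem⟩ hw2 rfl
          have e2 := trans_apply_of_le_half α α.symm w ⟨_, humem⟩ hw2 rfl
          rw [e1, ← e2]
          exact hUc i ⟨w, hw, rfl⟩
        · push_neg at hw2
          have hwl : (t i.castSucc : ℝ) ≤ w := Subtype.coe_le_coe.mpr hw.1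
          have hwr : (w : ℝ) ≤ t i.succ := Subtype.coe_le_coe.mpr hw.2
          have hi1 : (1 / 2 : ℝ) < t i.succ := lt_of_lt_of_le hw2 hwr
          have hik : k ≤ i.val + 1 := by
            by_contra hcc
            push_neg at hcc
            have := hkmin (i.val + 1) (by omega) (by omega)
            have e : (⟨i.val + 1, by omega⟩ : Fin (n + 1)) = i.succ := rfl
            rw [e] at this
            linarith
          have hin : i.val < n := i.2
          set j : Fin M := ⟨n - 1 - i.val, by omega⟩ with hj
          have humem : (2 - 2 * (w : ℝ)) ∈ I := ⟨by linarith [w.2.2], by linarith [w.2.1]⟩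
          set u : I := ⟨2 - 2 * (w : ℝ), humem⟩ with hudef
          have heval : (α.trans δ.symm) w = δ u :=
            trans_symm_apply_of_half_le α δ w u (le_of_lt hw2) rfl
          have humem2 : u ∈ Set.Icc (s j.castSucc) (s j.succ) := by
            constructor
            · show (s j.castSucc : ℝ) ≤ (u : ℝ)
              rw [hsv]
              show min 1 (2 - 2 * (t ⟨n - j.castSucc.val, by omega⟩ : ℝ)) ≤ 2 - 2 * (w : ℝ)
              have e : (⟨n - j.castSucc.val, by omega⟩ : Fin (n + 1)) = i.succ := by
                ext; show n - (n - 1 - i.val) = i.val + 1; omega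
              rw [e]
              exact le_trans (min_le_right _ _) (by linarith)
            · show (u : ℝ) ≤ (s j.succ : ℝ)
              rw [hsv]
              show 2 - 2 * (w : ℝ) ≤ min 1 (2 - 2 * (t ⟨n - j.succ.val, by omega⟩ : ℝ))
              have e : (⟨n - j.succ.val, by omega⟩ : Fin (n + 1)) = i.castSucc := by
                ext; show n - (n - 1 - i.val + 1) = i.val; omega
              rw [e]
              exact le_min (by linarith) (by linarith)
          have hji : (⟨n - 1 - j.val, by omega⟩ : Fin n) = i := by
            ext; show n - 1 - (n - 1 - i.val) = i.val; omega
          have hVU : V j = U i := congrArg U hji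
          rw [heval, ← hVU]
          exact hδU j ⟨u, humem2, rfl⟩
      · -- point condition
        intro i
        by_cases h2 : (t i : ℝ) ≤ 1 / 2
        · have humem : (2 * (t i : ℝ)) ∈ I := ⟨by linarith [(t i).2.1], by linarith⟩
          rw [trans_apply_of_le_half α δ.symm (t i) ⟨_, humem⟩ h2 rfl,
            trans_apply_of_le_half α α.symm (t i) ⟨_, humem⟩ h2 rfl]
        · push_neg at h2
          have hik : k ≤ i.val := by
            by_contra hcc
            push_neg at hcc
            have := hkmin i.val (by omega) (by omega)
            have e : (⟨i.val, by omega⟩ : Fin (n + 1)) = i := rfl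
            rw [e] at this
            linarith
          have humem : (2 - 2 * (t i : ℝ)) ∈ I :=
            ⟨by linarith [(t i).2.2], by linarith [(t i).2.1]⟩
          set u : I := ⟨2 - 2 * (t i : ℝ), humem⟩ with hudef
          rw [trans_symm_apply_of_half_le α δ (t i) u (le_of_lt h2) rfl,
            trans_symm_apply_of_half_le α α (t i) u (le_of_lt h2) rfl]
          have hiM : n - i.val < M + 1 := by omega
          have hus : u = s ⟨n - i.val, hiM⟩ := by
            apply Subtype.ext
            rw [hsv]
            show 2 - 2 * (t i : ℝ) = min 1 (2 - 2 * (t ⟨n - (n - i.val), by omega⟩ : ℝ))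
            have e : (⟨n - (n - i.val), by omega⟩ : Fin (n + 1)) = i := by
              ext; show n - (n - i.val) = i.val; omega
            rw [e, min_eq_right (by linarith)]
          rw [hus]
          exact hδpt ⟨n - i.val, hiM⟩
      · -- homotopic
        obtain ⟨F⟩ := hδβ
        exact (Path.Homotopic.refl α).hcomp ⟨F.symm₂⟩
  rw [h] at hq
  simp only [Set.mem_singleton_iff] at hq
  show pathClass _ ∈ (⊥ : Subgroup (FundamentalGroup X x))
  rw [Subgroup.mem_bot]
  exact hq
end
end

section
/- Let X be a topological space, x ∈ X, and let H be a subgroup of π₁(X, x). If X is homotopically path Hausdorff relative to H, then π_H^qs(X, x) = H. -/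
open unitInterval

noncomputable section

attribute [local instance] Path.Homotopic.setoid

variable {X Y : Type*} [TopologicalSpace X] [TopologicalSpace Y]

lemma pathClass_hom' {x : X} (f : Path x x) :
    (pathClass f : Path.Homotopic.Quotient x x) = (⟦f⟧ : Path.Homotopic.Quotient x x) := rfl

lemma pathClass_trans' {x : X} (f g : Path x x) :
    pathClass (f.trans g) = pathClass g * pathClass f := by
  show (⟦f.trans g⟧ : Path.Homotopic.Quotient x x) =
    CategoryTheory.CategoryStruct.comp (pathClass f) (pathClass g)
  rfl

lemma pathClass_symm' {x : X} (f : Path x x) :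
    pathClass f.symm = (pathClass f)⁻¹ := by
  rfl

lemma pathClass_refl' {x : X} : pathClass (Path.refl x) = 1 := by
  rfl

lemma pathClass_congr' {x : X} {f g : Path x x} (h : f.Homotopic g) :
    pathClass f = pathClass g := by
  show (⟦f⟧ : Path.Homotopic.Quotient x x) = ⟦g⟧
  exact Quotient.sound h

lemma pathClass_surj {x : X} (p : FundamentalGroup X x) :
    ∃ f : Path x x, pathClass f = p := by
  obtain ⟨f, hf⟩ := Quotient.exists_rep (p : Path.Homotopic.Quotient x x)
  exact ⟨f, hf⟩

/-- if `X` is homotopically path Hausdorff relative to a subgroup `H`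
of `π₁(X, x)`, then `π_H^qs(X, x) = H`. -/
theorem stmt15 (x : X) (H : Subgroup (FundamentalGroup X x))
    (h : HPHausdorffRel x (H : Set (FundamentalGroup X x))) :
    qsSet x ↑H = (H : Set (FundamentalGroup X x)) := by
  apply Set.Subset.antisymm
  · rintro p ⟨f, h', pf, hH, hclose⟩
    by_contra hp
    have hnot : pathClass (h'.trans f.symm) ∉ (H : Set (FundamentalGroup X x)) := by
      rw [pathClass_trans', pathClass_symm']
      intro hmem
      apply hp
      rw [← pf]
      have : pathClass h' * ((pathClass f)⁻¹ * pathClass h')⁻¹ ∈ H :=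
        H.mul_mem hH (H.inv_mem hmem)
      simpa only [mul_inv_rev, inv_inv, mul_inv_cancel_left, SetLike.mem_coe] using this
    obtain ⟨n, t, ht0, ht1, hmono, U, hopen, hcov, hkey⟩ := h x h' f hnot
    obtain ⟨γ, hγU, hγt, hγf⟩ := hclose n t ht0 ht1 hmono U hopen hcov
    apply hkey γ hγU hγt
    have : pathClass (γ.trans f.symm) = 1 := by
      refine (pathClass_congr' (hγf.hcomp (Path.Homotopic.refl f.symm))).trans ?_
      exact (pathClass_congr' ⟨(Path.Homotopy.reflTransSymm f).symm⟩).trans pathClass_refl'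
    rw [this]
    exact H.one_mem
  · intro p hp
    obtain ⟨f, hf⟩ := pathClass_surj p
    refine ⟨f, f, hf, hf ▸ hp, ?_⟩
    intro n t ht0 ht1 hmono U hopen hcov
    exact ⟨f, hcov, fun i => rfl, Path.Homotopic.refl f⟩
end
end

section
/- Let X be a topological space and x ∈ X. If X is homotopically path Hausdorff (relative to the trivial subgroup of π₁(X, x)), then π_H^qs(X, x) = H for every subgroup H of π₁(X, x). -/
open unitInterval

noncomputable section

attribute [local instance] Path.Homotopic.setoid

variable {X Y : Type*} [TopologicalSpace X] [TopologicalSpace Y]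

open CategoryTheory in
lemma pathClass_eq_iff {x : X} (f g : Path x x) :
    pathClass f = pathClass g ↔ f.Homotopic g := by
  constructor
  · intro hfg
    exact Quotient.exact hfg
  · intro hfg
    unfold pathClass
    congr 1
    exact Quotient.sound hfg

lemma trans_symm_homotopic_refl {x y : X} (f : Path x y) :
    (f.trans f.symm).Homotopic (Path.refl x) :=
  ⟨(Path.Homotopy.reflTransSymm f).symm⟩

lemma homotopic_of_trans_symm_s16 {x : X} (f g : Path x x)
    (h1 : (g.trans f.symm).Homotopic (Path.refl x)) : g.Homotopic f :=
  Path.Homotopic.trans ⟨(Path.Homotopy.transRefl g).symm⟩ <|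
  Path.Homotopic.trans (Path.Homotopic.hcomp (Path.Homotopic.refl g)
      ⟨Path.Homotopy.reflSymmTrans f⟩) <|
  Path.Homotopic.trans ⟨(Path.Homotopy.transAssoc g f.symm f).symm⟩ <|
  Path.Homotopic.trans (Path.Homotopic.hcomp h1 (Path.Homotopic.refl f))
      ⟨Path.Homotopy.reflTrans f⟩

/-- if `X` is homotopically path Hausdorff (relative to the trivial
subgroup), then `π_H^qs(X, x) = H` for every subgroup `H` of `π₁(X, x)`. -/
theorem stmt16 (x : X)
    (h : HPHausdorffRel x ((⊥ : Subgroup (FundamentalGroup X x)) : Set (FundamentalGroup X x))) :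
    ∀ H : Subgroup (FundamentalGroup X x),
      qsSet x ↑H = (H : Set (FundamentalGroup X x)) := by
  intro H
  ext p
  constructor
  · rintro ⟨f, g, rfl, hgH, hclose⟩
    -- it suffices to show f is homotopic to g
    suffices hfg : pathClass f = pathClass g by rwa [hfg]
    by_contra hne
    have hnot : pathClass (g.trans f.symm) ∉
        ((⊥ : Subgroup (FundamentalGroup X x)) : Set (FundamentalGroup X x)) := by
      intro hmem
      apply hne
      rw [pathClass_eq_iff]
      have h1 : (g.trans f.symm).Homotopic (Path.refl x) := by
        rw [← pathClass_eq_one_iff]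
        simpa using hmem
      exact (homotopic_of_trans_symm_s16 f g h1).symm
    obtain ⟨n, t, ht0, ht1, htmono, U, hUopen, hgU, hsep⟩ := h x g f hnot
    obtain ⟨γ, hγU, hγt, hγf⟩ := hclose n t ht0 ht1 htmono U hUopen hgU
    apply hsep γ hγU hγt
    simp only [SetLike.mem_coe, Subgroup.mem_bot, pathClass_eq_one_iff]
    exact Path.Homotopic.trans
      (Path.Homotopic.hcomp hγf (Path.Homotopic.refl f.symm))
      (trans_symm_homotopic_refl f)
  · intro hp
    obtain ⟨f, hf⟩ := Quotient.exists_rep (s := Path.Homotopic.setoid x x) p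
    have hfp : pathClass f = p := by
      simp only [pathClass]
      exact hf
    refine ⟨f, f, hfp, by rwa [hfp], ?_⟩
    intro n t ht0 ht1 hmono U hUo hgU
    exact ⟨f, hgU, fun i => rfl, Path.Homotopic.refl _⟩
end
end
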